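/- Let s be a node of the Stern–Brocot tree and t its positive child; let t₊ and t₋ denote the positive and negative children of t. Then σ(t₊) = σ(t)·σ(s)⁻¹·σ(t) and σ(t₋) = σ(t)·ρ·υ·σ(s). Symmetrically, if t is the negative child of s, then σ(t₋) = σ(t)·σ(s)⁻¹·σ(t) and σ(t₊) = σ(t)·υ·ρ·σ(s). In particular, the label (σ(s), σ(t), ε) of a tree edge uniquely determines the labels of the two edges leaving t. -/

import Mathlib

/-- The alphabet `{r, u}` of cube rolls: `r` = right roll, `u` = up roll. -/
inductive Letter
  | r : Letter
  | u : Letter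
  deriving DecidableEq

/-- The times `t ∈ (0,1)` at which the segment `t ↦ (t·a, t·b)` crosses a grid line:
`t = k/a` (crossing the vertical line `x = k`) for `1 ≤ k ≤ a−1`, and `t = i/b`
(crossing the horizontal line `y = i`) for `1 ≤ i ≤ b−1`. -/
def crossingTimes (a b : ℕ) : Finset ℚ :=
  ((Finset.Icc 1 (a - 1)).image fun k : ℕ => (k : ℚ) / (a : ℚ)) ∪
    ((Finset.Icc 1 (b - 1)).image fun i : ℕ => (i : ℚ) / (b : ℚ))

/-- The tumble sequence `τ(a,b)`: the word over `{r, u}` obtained by recording, in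
increasing order of the crossing times `t` of the segment `t ↦ (t·a, t·b)`, a letter
`r` at each crossing `t = k/a` of a vertical line and a letter `u` at each crossing
`t = i/b` of a horizontal line. -/
def tumbleWord (a b : ℕ) : List Letter :=
  ((crossingTimes a b).sort (· ≤ ·)).map fun t =>
    if (t * (a : ℚ)).den = 1 then Letter.r else Letter.u

/-- One step of the Stern–Brocot recursion on triples `(g, g⁺, g⁻)`:
`true` (the letter `+`) sends `(g, g⁺, g⁻)` to `(g + g⁺, g⁺, g)`, and
`false` (the letter `−`) sends `(g, g⁺, g⁻)` to `(g + g⁻, g, g⁻)`. -/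
def sbStep : (ℕ × ℕ) × (ℕ × ℕ) × (ℕ × ℕ) → Bool → (ℕ × ℕ) × (ℕ × ℕ) × (ℕ × ℕ)
  | (g, gp, _gm), true => (g + gp, gp, g)
  | (g, _gp, gm), false => (g + gm, g, gm)

/-- The Stern–Brocot triple `(g(w), g⁺(w), g⁻(w))` of the node indexed by the word `w`
over `{+, −}` (`true` = `+`, `false` = `−`), starting from
`(g(ε), g⁺(ε), g⁻(ε)) = ((1,1), (0,1), (1,0))`. -/
def sb (w : List Bool) : (ℕ × ℕ) × (ℕ × ℕ) × (ℕ × ℕ) :=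
  w.foldl sbStep ((1, 1), (0, 1), (1, 0))

/-- The permutation of `{0,1,2,3}` given in one-line notation by
`f 0, f 1, f 2, f 3`. -/
def ol (f : Fin 4 → Fin 4) (h : Function.Bijective f := by decide) :
    Equiv.Perm (Fin 4) :=
  ⟨f, Fintype.bijInv h, Fintype.leftInverse_bijInv h, Fintype.rightInverse_bijInv h⟩

/-- `ρ = 1230`, the permutation `0↦1, 1↦2, 2↦3, 3↦0` (a right roll). -/
def ρ : Equiv.Perm (Fin 4) := ol ![1, 2, 3, 0]

/-- `υ = 2310`, the permutation `0↦2, 1↦3, 2↦1, 3↦0` (an up roll). -/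
def υ : Equiv.Perm (Fin 4) := ol ![2, 3, 1, 0]

/-- The permutation associated to a letter: `r ↦ ρ`, `u ↦ υ`. -/
def toPerm : Letter → Equiv.Perm (Fin 4)
  | Letter.r => ρ
  | Letter.u => υ

/-- The orientation of a word over `{r, u}`: its image under the monoid homomorphism
into `S₄` sending `r ↦ ρ` and `u ↦ υ`, composed left-to-right (the leftmost letter
acts first).  Note that in Mathlib `(f * g) x = f (g x)`, so the left-to-right
product of a word is accumulated by multiplying each new letter on the left. -/
def orient (l : List Letter) : Equiv.Perm (Fin 4) :=
  l.foldl (fun acc x => toPerm x * acc) 1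

/-- `σ` on pairs of nonnegative integers: `σ((0,1)) = ρ⁻¹`, `σ((1,0)) = υ⁻¹`, and
`σ((a,b))` is the orientation of the tumble sequence `τ(a,b)` otherwise. -/
def sigmaPt (p : ℕ × ℕ) : Equiv.Perm (Fin 4) :=
  if p = (0, 1) then ρ⁻¹
  else if p = (1, 0) then υ⁻¹
  else orient (tumbleWord p.1 p.2)

/-- The cube orientation `σ(g(w))` associated to the Stern–Brocot node indexed by the
word `w`. -/
def σnode (w : List Bool) : Equiv.Perm (Fin 4) :=
  sigmaPt (sb w).1

-- sanity checks

-- ===================== auxiliary development =====================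

section Aux

open List

/-! ### orientation basics -/

lemma orient_foldl (l : List Letter) (g : Equiv.Perm (Fin 4)) :
    l.foldl (fun acc x => toPerm x * acc) g = orient l * g := by
  induction l generalizing g with
  | nil => exact (one_mul g).symm
  | cons x xs ih =>
    rw [List.foldl_cons, ih]
    have h2 : orient (x :: xs) = orient xs * (toPerm x * 1) := by
      rw [orient, List.foldl_cons]; exact ih _
    rw [h2, mul_one, mul_assoc]

lemma orient_nil : orient [] = 1 := rfl

lemma orient_cons (x : Letter) (l : List Letter) :
    orient (x :: l) = orient l * toPerm x := by
  rw [orient, List.foldl_cons, orient_foldl, mul_one]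

lemma orient_append (l₁ l₂ : List Letter) :
    orient (l₁ ++ l₂) = orient l₂ * orient l₁ := by
  simp only [orient, List.foldl_append]
  rw [show (List.foldl (fun acc x => toPerm x * acc) 1 l₁) = orient l₁ from rfl,
    orient_foldl]
  rfl

lemma orient_replicate_r (n : ℕ) : orient (List.replicate n Letter.r) = ρ ^ n := by
  induction n with
  | zero => rfl
  | succ n ih => rw [List.replicate_succ, orient_cons, ih, toPerm, pow_succ]

lemma orient_replicate_u (n : ℕ) : orient (List.replicate n Letter.u) = υ ^ n := by
  induction n with
  | zero => rfl
  | succ n ih => rw [List.replicate_succ, orient_cons, ih, toPerm, pow_succ]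

/-! ### rationals -/

lemma dvd_of_den_eq_one {n m : ℕ} (hm : m ≠ 0) (h : ((n : ℚ) / (m : ℚ)).den = 1) :
    m ∣ n := by
  set q : ℚ := (n : ℚ) / (m : ℚ) with hq
  have h1 : (q.num : ℚ) = q := (Rat.den_eq_one_iff q).1 h
  have h2 : (q.num : ℚ) * m = n := by
    rw [h1, hq]
    field_simp
  have h3 : q.num * (m : ℤ) = (n : ℤ) := by exact_mod_cast h2
  have : (m : ℤ) ∣ (n : ℤ) := Dvd.intro_left q.num h3
  exact_mod_cast this

lemma mem_crossingTimes {a b : ℕ} {x : ℚ} :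
    x ∈ crossingTimes a b ↔
      (∃ k, 1 ≤ k ∧ k ≤ a - 1 ∧ x = (k : ℚ) / a) ∨
        (∃ i, 1 ≤ i ∧ i ≤ b - 1 ∧ x = (i : ℚ) / b) := by
  simp only [crossingTimes, Finset.mem_union, Finset.mem_image, Finset.mem_Icc]
  constructor
  · rintro (⟨k, ⟨h1, h2⟩, h3⟩ | ⟨i, ⟨h1, h2⟩, h3⟩)
    · exact Or.inl ⟨k, h1, h2, h3.symm⟩
    · exact Or.inr ⟨i, h1, h2, h3.symm⟩
  · rintro (⟨k, h1, h2, h3⟩ | ⟨i, h1, h2, h3⟩)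
    · exact Or.inl ⟨k, ⟨h1, h2⟩, h3.symm⟩
    · exact Or.inr ⟨i, ⟨h1, h2⟩, h3.symm⟩

lemma vert_den {a k : ℕ} (ha : a ≠ 0) : (((k : ℚ) / a) * a).den = 1 := by
  rw [div_mul_cancel₀]
  · exact Rat.den_natCast k
  · exact_mod_cast ha

lemma horiz_den {a b i : ℕ} (hab : Nat.Coprime a b) (hi1 : 1 ≤ i) (hi2 : i ≤ b - 1) :
    (((i : ℚ) / b) * a).den ≠ 1 := by
  have hb : b ≠ 0 := by omega
  have hib : i < b := by omega
  intro h
  have : ((i : ℚ) / b) * a = ((i * a : ℕ) : ℚ) / (b : ℚ) := by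
    push_cast; ring
  rw [this] at h
  have hdvd : b ∣ i * a := dvd_of_den_eq_one hb h
  have : b ∣ i := (Nat.Coprime.dvd_of_dvd_mul_right (Nat.Coprime.symm hab)) hdvd
  have := Nat.le_of_dvd (by omega) this
  omega

/-! ### tumble words with one coordinate equal to 1 -/

lemma crossingTimes_card_a1 {a : ℕ} : (crossingTimes a 1).card = a - 1 := by
  have : crossingTimes a 1 =
      (Finset.Icc 1 (a - 1)).image fun k : ℕ => (k : ℚ) / (a : ℚ) := by
    simp [crossingTimes]
  rw [this]
  rcases Nat.eq_zero_or_pos a with rfl | ha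
  · simp
  · have hinj : Set.InjOn (fun k : ℕ => (k : ℚ) / (a : ℚ)) ↑(Finset.Icc 1 (a - 1)) := by
      intro x _ y _ hxy
      have ha' : (a : ℚ) ≠ 0 := by exact_mod_cast ha.ne'
      field_simp at hxy
      exact_mod_cast hxy
    rw [Finset.card_image_of_injOn hinj, Nat.card_Icc]
    omega

lemma tumbleWord_a1 (a : ℕ) : tumbleWord a 1 = List.replicate (a - 1) Letter.r := by
  rw [List.eq_replicate_iff]
  constructor
  · rw [tumbleWord, List.length_map, Finset.length_sort, crossingTimes_card_a1]
  · intro x hx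
    rw [tumbleWord] at hx
    obtain ⟨t, ht, rfl⟩ := List.mem_map.1 hx
    rw [Finset.mem_sort] at ht
    rcases mem_crossingTimes.1 ht with ⟨k, h1, h2, rfl⟩ | ⟨i, h1, h2, _⟩
    · have ha : a ≠ 0 := by omega
      rw [if_pos (vert_den ha)]
    · omega

lemma tumbleWord_1b (b : ℕ) : tumbleWord 1 b = List.replicate (b - 1) Letter.u := by
  rw [List.eq_replicate_iff]
  have hcard : (crossingTimes 1 b).card = b - 1 := by
    have : crossingTimes 1 b =
        (Finset.Icc 1 (b - 1)).image fun i : ℕ => (i : ℚ) / (b : ℚ) := by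
      simp [crossingTimes]
    rw [this]
    rcases Nat.eq_zero_or_pos b with rfl | hb
    · simp
    · have hinj : Set.InjOn (fun i : ℕ => (i : ℚ) / (b : ℚ)) ↑(Finset.Icc 1 (b - 1)) := by
        intro x _ y _ hxy
        have hb' : (b : ℚ) ≠ 0 := by exact_mod_cast hb.ne'
        field_simp at hxy
        exact_mod_cast hxy
      rw [Finset.card_image_of_injOn hinj, Nat.card_Icc]
      omega
  constructor
  · rw [tumbleWord, List.length_map, Finset.length_sort, hcard]
  · intro x hx
    rw [tumbleWord] at hx
    obtain ⟨t, ht, rfl⟩ := List.mem_map.1 hx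
    rw [Finset.mem_sort] at ht
    rcases mem_crossingTimes.1 ht with ⟨k, h1, h2, _⟩ | ⟨i, h1, h2, rfl⟩
    · omega
    · rw [if_neg]
      exact horiz_den (Nat.coprime_one_left b) h1 h2

/-! ### Sig -/

/-- `Sig p = υ * σ(p) * ρ`, the orientation of the "full Christoffel word"
`r · τ(p) · u` (left-to-right). -/
def Sig (p : ℕ × ℕ) : Equiv.Perm (Fin 4) := υ * sigmaPt p * ρ

lemma Sig_10 : Sig (1, 0) = ρ := by
  simp [Sig, sigmaPt]

lemma Sig_01 : Sig (0, 1) = υ := by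
  simp [Sig, sigmaPt]

lemma sigmaPt_a1 {a : ℕ} (ha : 1 ≤ a) : sigmaPt (a, 1) = ρ ^ (a - 1) := by
  rw [sigmaPt, if_neg (by simp [Prod.ext_iff]; omega), if_neg (by simp [Prod.ext_iff]),
    tumbleWord_a1, orient_replicate_r]

lemma sigmaPt_1b {b : ℕ} (hb : 1 ≤ b) : sigmaPt (1, b) = υ ^ (b - 1) := by
  rw [sigmaPt, if_neg (by simp [Prod.ext_iff]), if_neg (by simp [Prod.ext_iff]; omega),
    tumbleWord_1b, orient_replicate_u]

end Aux

section Splice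

/-! ### sorted-list helpers -/

lemma sorted_map_mono {l : List ℚ} {φ : ℚ → ℚ} (h : l.Pairwise (· < ·))
    (mono : ∀ x ∈ l, ∀ y ∈ l, x < y → φ x < φ y) :
    (l.map φ).Pairwise (· < ·) := by
  induction l with
  | nil => simp
  | cons a l ih =>
    rw [List.map_cons, List.pairwise_cons]
    rw [List.pairwise_cons] at h
    refine ⟨?_, ih h.2 fun x hx y hy hxy =>
      mono x (List.mem_cons_of_mem _ hx) y (List.mem_cons_of_mem _ hy) hxy⟩
    intro b hb
    obtain ⟨y, hy, rfl⟩ := List.mem_map.1 hb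
    exact mono a List.mem_cons_self y (List.mem_cons_of_mem _ hy) (h.1 y hy)

lemma sort_eq_of {s : Finset ℚ} {l : List ℚ} (hs : l.Pairwise (· < ·))
    (hmem : ∀ x, x ∈ l ↔ x ∈ s) : s.sort (· ≤ ·) = l := by
  refine List.Perm.eq_of_pairwise' (Finset.pairwise_sort _ _) (hs.imp le_of_lt) ?_
  refine List.perm_of_nodup_nodup_toFinset_eq (Finset.sort_nodup _ _) hs.nodup ?_
  ext x
  simp [List.mem_toFinset, Finset.mem_sort, hmem]

/-! ### sign keys -/

lemma sign_key {bb dd X Y i : ℤ} (h : dd * X = bb * Y + i) (hdd : 0 < dd)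
    (hi : 0 < i) (hib : i < bb) : (X < 0 ↔ Y < 0) ∧ (0 < X ↔ 0 ≤ Y) := by
  constructor
  · constructor
    · intro hX
      nlinarith
    · intro hY
      nlinarith
  · constructor
    · intro hX
      nlinarith
    · intro hY
      nlinarith

lemma key_sign {dd bb ii KB IA KD IC : ℕ}
    (h : (dd : ℤ) * ((KB : ℤ) - IA) = (bb : ℤ) * ((KD : ℤ) - IC) + ii)
    (hdd : 0 < dd) (hii : 0 < ii) (hib : ii < bb) :
    (KB < IA ↔ KD < IC) ∧ (IA < KB ↔ IC ≤ KD) := by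
  have h1 := sign_key h (by exact_mod_cast hdd) (by exact_mod_cast hii)
    (by exact_mod_cast hib)
  obtain ⟨h2, h3⟩ := h1
  constructor
  · constructor
    · intro hx
      have : (KB : ℤ) - IA < 0 := by omega
      have := h2.1 this
      omega
    · intro hx
      have : (KD : ℤ) - IC < 0 := by omega
      have := h2.2 this
      omega
  · constructor
    · intro hx
      have : (0:ℤ) < (KB : ℤ) - IA := by omega
      have := h3.1 this
      omega
    · intro hx
      have : (0:ℤ) ≤ (KD : ℤ) - IC := by omega
      have := h3.2 this
      omega

lemma q_lt {n m p q : ℕ} (hm : 0 < m) (hq : 0 < q) :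
    ((n : ℚ) / m < (p : ℚ) / q) ↔ n * q < p * m := by
  rw [div_lt_div_iff₀ (by exact_mod_cast hm) (by exact_mod_cast hq)]
  constructor <;> intro h <;> exact_mod_cast h

/-! ### the splice maps -/

/-- Map a crossing time of the segment `(c,d)` to the corresponding crossing time of
the segment `(a,b) = (c+e, d+f)`. -/
def phiL (c d a b : ℕ) (t : ℚ) : ℚ :=
  if (t * c).den = 1 then t * c / a else t * d / b

/-- Map a crossing time of the segment `(e,f)` to the corresponding crossing time of
the segment `(a,b) = (c+e, d+f)` (second half). -/
def phiR (e f c d a b : ℕ) (t : ℚ) : ℚ :=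
  if (t * e).den = 1 then (t * e + c) / a else (t * f + d) / b

lemma phiL_vert {c d a b : ℕ} (k : ℕ) (hc : c ≠ 0) :
    phiL c d a b ((k : ℚ) / c) = (k : ℚ) / a := by
  have h : ((k : ℚ) / c) * c = k := div_mul_cancel₀ _ (by exact_mod_cast hc)
  rw [phiL, h, if_pos (Rat.den_natCast k)]

lemma phiL_horiz {c d a b i : ℕ} (hcd : Nat.Coprime c d) (hi1 : 1 ≤ i)
    (hi2 : i ≤ d - 1) : phiL c d a b ((i : ℚ) / d) = (i : ℚ) / b := by
  have hd : d ≠ 0 := by omega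
  rw [phiL, if_neg (horiz_den hcd hi1 hi2),
    div_mul_cancel₀ _ (show (d:ℚ) ≠ 0 by exact_mod_cast hd)]

lemma phiR_vert {e f c d a b : ℕ} (k : ℕ) (he : e ≠ 0) :
    phiR e f c d a b ((k : ℚ) / e) = ((k + c : ℕ) : ℚ) / a := by
  have h : ((k : ℚ) / e) * e = k := div_mul_cancel₀ _ (by exact_mod_cast he)
  rw [phiR, h, if_pos (Rat.den_natCast k)]
  push_cast
  ring

lemma phiR_horiz {e f c d a b i : ℕ} (hef : Nat.Coprime e f) (hi1 : 1 ≤ i)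
    (hi2 : i ≤ f - 1) : phiR e f c d a b ((i : ℚ) / f) = ((i + d : ℕ) : ℚ) / b := by
  have hf : f ≠ 0 := by omega
  rw [phiR, if_neg (horiz_den hef hi1 hi2),
    div_mul_cancel₀ _ (show (f:ℚ) ≠ 0 by exact_mod_cast hf)]
  push_cast
  ring

end Splice

section MainSplice

variable {c d e f : ℕ}

lemma coprime_of_bezout {m n : ℕ} (x y : ℤ) (h : x * m + y * n = 1) :
    Nat.Coprime m n := by
  have hco : IsCoprime (m : ℤ) (n : ℤ) := ⟨x, y, h⟩
  have := Int.isCoprime_iff_gcd_eq_one.mp hco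
  rwa [Int.gcd_natCast_natCast] at this

lemma tumble_splice (hd : 1 ≤ d) (he : 1 ≤ e) (hdet : c * f = d * e + 1) :
    tumbleWord (c + e) (d + f) =
      tumbleWord c d ++ [Letter.u, Letter.r] ++ tumbleWord e f := by
  have hc : 1 ≤ c := by
    rcases Nat.eq_zero_or_pos c with rfl | h
    · rw [zero_mul] at hdet
      exact absurd hdet.symm (Nat.succ_ne_zero _)
    · exact h
  have hf : 1 ≤ f := by
    rcases Nat.eq_zero_or_pos f with rfl | h
    · rw [mul_zero] at hdet
      exact absurd hdet.symm (Nat.succ_ne_zero _)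
    · exact h
  have hdetZ : (c : ℤ) * f = (d : ℤ) * e + 1 := by exact_mod_cast hdet
  have hab : Nat.Coprime (c + e) (d + f) :=
    coprime_of_bezout (f : ℤ) (-(e : ℤ)) (by push_cast; linear_combination hdetZ)
  have hcd : Nat.Coprime c d :=
    coprime_of_bezout (f : ℤ) (-(e : ℤ)) (by push_cast; linear_combination hdetZ)
  have hef : Nat.Coprime e f :=
    coprime_of_bezout (-(d : ℤ)) (c : ℤ) (by push_cast; linear_combination hdetZ)
  have hA : 0 < c + e := by omega
  have hB : 0 < d + f := by omega
  -- the key order-comparison facts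
  have key1 : ∀ k i : ℕ, 1 ≤ i → i ≤ d - 1 →
      ((k * (d + f) < i * (c + e) ↔ k * d < i * c) ∧
        (i * (c + e) < k * (d + f) ↔ i * c ≤ k * d)) := by
    intro k i hi1 hi2
    refine key_sign (dd := d) (bb := d + f) (ii := i) ?_ hd hi1 (by omega)
    push_cast
    linear_combination (i : ℤ) * hdetZ
  have key2 : ∀ k i : ℕ, 1 ≤ i → i ≤ f - 1 →
      (((k + c) * (d + f) < (i + d) * (c + e) ↔ k * f < i * e) ∧
        ((i + d) * (c + e) < (k + c) * (d + f) ↔ i * e ≤ k * f)) := by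
    intro k i hi1 hi2
    refine key_sign (dd := f) (bb := d + f) (ii := f - i) ?_ hf (by omega) (by omega)
    have hif : ((f - i : ℕ) : ℤ) = (f : ℤ) - i := by
      have : i ≤ f := by omega
      exact_mod_cast Int.ofNat_sub this
    push_cast [hif]
    linear_combination ((f : ℤ) - i) * hdetZ
  -- the two halves
  set φ₁ := phiL c d (c + e) (d + f) with hφ₁
  set φ₂ := phiR e f c d (c + e) (d + f) with hφ₂
  set L1 := (crossingTimes c d).sort (· ≤ ·) with hL1def
  set L2 := (crossingTimes e f).sort (· ≤ ·) with hL2def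
  -- membership descriptions
  have hL1 : ∀ x ∈ L1, (∃ k, 1 ≤ k ∧ k ≤ c - 1 ∧ x = (k : ℚ) / c ∧
      φ₁ x = (k : ℚ) / ((c + e : ℕ) : ℚ)) ∨
      (∃ i, 1 ≤ i ∧ i ≤ d - 1 ∧ x = (i : ℚ) / d ∧
        φ₁ x = (i : ℚ) / ((d + f : ℕ) : ℚ)) := by
    intro x hx
    rw [hL1def, Finset.mem_sort] at hx
    rcases mem_crossingTimes.1 hx with ⟨k, h1, h2, rfl⟩ | ⟨i, h1, h2, rfl⟩
    · exact Or.inl ⟨k, h1, h2, rfl, phiL_vert k (by omega)⟩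
    · exact Or.inr ⟨i, h1, h2, rfl, phiL_horiz hcd h1 h2⟩
  have hL2 : ∀ x ∈ L2, (∃ k, 1 ≤ k ∧ k ≤ e - 1 ∧ x = (k : ℚ) / e ∧
      φ₂ x = ((k + c : ℕ) : ℚ) / ((c + e : ℕ) : ℚ)) ∨
      (∃ i, 1 ≤ i ∧ i ≤ f - 1 ∧ x = (i : ℚ) / f ∧
        φ₂ x = ((i + d : ℕ) : ℚ) / ((d + f : ℕ) : ℚ)) := by
    intro x hx
    rw [hL2def, Finset.mem_sort] at hx
    rcases mem_crossingTimes.1 hx with ⟨k, h1, h2, rfl⟩ | ⟨i, h1, h2, rfl⟩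
    · exact Or.inl ⟨k, h1, h2, rfl, phiR_vert k (by omega)⟩
    · exact Or.inr ⟨i, h1, h2, rfl, phiR_horiz hef h1 h2⟩
  set B1 := L1.map φ₁ with hB1def
  set B2 := L2.map φ₂ with hB2def
  set T : List ℚ := B1 ++ ((d : ℚ) / ((d + f : ℕ) : ℚ) ::
      (c : ℚ) / ((c + e : ℕ) : ℚ) :: B2) with hTdef
  -- form of elements of B1 and B2
  have hB1mem : ∀ x ∈ B1, (∃ k, 1 ≤ k ∧ k ≤ c - 1 ∧
      x = (k : ℚ) / ((c + e : ℕ) : ℚ)) ∨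
      (∃ i, 1 ≤ i ∧ i ≤ d - 1 ∧ x = (i : ℚ) / ((d + f : ℕ) : ℚ)) := by
    intro x hx
    obtain ⟨t, ht, rfl⟩ := List.mem_map.1 hx
    rcases hL1 t ht with ⟨k, h1, h2, _, h4⟩ | ⟨i, h1, h2, _, h4⟩
    · exact Or.inl ⟨k, h1, h2, h4⟩
    · exact Or.inr ⟨i, h1, h2, h4⟩
  have hB2mem : ∀ x ∈ B2, (∃ k, 1 ≤ k ∧ k ≤ e - 1 ∧
      x = ((k + c : ℕ) : ℚ) / ((c + e : ℕ) : ℚ)) ∨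
      (∃ i, 1 ≤ i ∧ i ≤ f - 1 ∧ x = ((i + d : ℕ) : ℚ) / ((d + f : ℕ) : ℚ)) := by
    intro x hx
    obtain ⟨t, ht, rfl⟩ := List.mem_map.1 hx
    rcases hL2 t ht with ⟨k, h1, h2, _, h4⟩ | ⟨i, h1, h2, _, h4⟩
    · exact Or.inl ⟨k, h1, h2, h4⟩
    · exact Or.inr ⟨i, h1, h2, h4⟩
  -- B1 < d/b
  have hB1lt : ∀ x ∈ B1, x < (d : ℚ) / ((d + f : ℕ) : ℚ) := by
    intro x hx
    rcases hB1mem x hx with ⟨k, h1, h2, rfl⟩ | ⟨i, h1, h2, rfl⟩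
    · rw [q_lt hA hB]
      nlinarith [mul_le_mul_left (show k + 1 ≤ c by omega) (d + f), hdet]
    · rw [q_lt hB hB]
      have : i < d := by omega
      nlinarith [this, hB]
  -- d/b < c/a
  have hdb_ca : (d : ℚ) / ((d + f : ℕ) : ℚ) < (c : ℚ) / ((c + e : ℕ) : ℚ) := by
    rw [q_lt hB hA]
    nlinarith [hdet]
  -- d/b < elements of B2, c/a < elements of B2
  have hcaB2 : ∀ y ∈ B2, (c : ℚ) / ((c + e : ℕ) : ℚ) < y := by
    intro y hy
    rcases hB2mem y hy with ⟨k, h1, h2, rfl⟩ | ⟨i, h1, h2, rfl⟩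
    · rw [q_lt hA hA]
      have : c < k + c := by omega
      nlinarith [this, hA]
    · rw [q_lt hA hB]
      nlinarith [hdet, mul_le_mul_left (show 1 + d ≤ i + d by omega) (c + e)]
  have hdbB2 : ∀ y ∈ B2, (d : ℚ) / ((d + f : ℕ) : ℚ) < y := fun y hy =>
    lt_trans hdb_ca (hcaB2 y hy)
  -- sortedness of B1
  have hs1 : B1.Pairwise (· < ·) := by
    refine sorted_map_mono (Finset.sortedLT_sort _).pairwise ?_
    intro x hx y hy hxy
    rcases hL1 x hx with ⟨k, hk1, hk2, hx3, hx4⟩ | ⟨i, hi1, hi2, hx3, hx4⟩ <;>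
      rcases hL1 y hy with ⟨k', hk1', hk2', hy3, hy4⟩ | ⟨i', hi1', hi2', hy3, hy4⟩ <;>
      rw [hx3, hy3] at hxy <;> rw [hx4, hy4]
    · rw [q_lt (by omega) (by omega)] at hxy
      rw [q_lt hA hA]
      exact mul_lt_mul_of_pos_right (lt_of_mul_lt_mul_right hxy (Nat.zero_le c)) hA
    · rw [q_lt (by omega) (by omega)] at hxy
      rw [q_lt hA hB]
      exact ((key1 k i' hi1' hi2').1).2 hxy
    · rw [q_lt (by omega) (by omega)] at hxy
      rw [q_lt hB hA]
      exact ((key1 k' i hi1 hi2).2).2 hxy.le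
    · rw [q_lt (by omega) (by omega)] at hxy
      rw [q_lt hB hB]
      exact mul_lt_mul_of_pos_right (lt_of_mul_lt_mul_right hxy (Nat.zero_le d)) hB
  -- sortedness of B2
  have hs2 : B2.Pairwise (· < ·) := by
    refine sorted_map_mono (Finset.sortedLT_sort _).pairwise ?_
    intro x hx y hy hxy
    rcases hL2 x hx with ⟨k, hk1, hk2, hx3, hx4⟩ | ⟨i, hi1, hi2, hx3, hx4⟩ <;>
      rcases hL2 y hy with ⟨k', hk1', hk2', hy3, hy4⟩ | ⟨i', hi1', hi2', hy3, hy4⟩ <;>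
      rw [hx3, hy3] at hxy <;> rw [hx4, hy4]
    · rw [q_lt (by omega) (by omega)] at hxy
      rw [q_lt hA hA]
      have hkk : k < k' := lt_of_mul_lt_mul_right hxy (Nat.zero_le e)
      exact mul_lt_mul_of_pos_right (by omega) hA
    · rw [q_lt (by omega) (by omega)] at hxy
      rw [q_lt hA hB]
      exact ((key2 k i' hi1' hi2').1).2 hxy
    · rw [q_lt (by omega) (by omega)] at hxy
      rw [q_lt hB hA]
      exact ((key2 k' i hi1 hi2).2).2 hxy.le
    · rw [q_lt (by omega) (by omega)] at hxy
      rw [q_lt hB hB]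
      have hii : i < i' := lt_of_mul_lt_mul_right hxy (Nat.zero_le f)
      exact mul_lt_mul_of_pos_right (by omega) hB
  -- sortedness of T
  have hsT : T.Pairwise (· < ·) := by
    rw [hTdef, List.pairwise_append]
    refine ⟨hs1, ?_, ?_⟩
    · rw [List.pairwise_cons]
      refine ⟨?_, ?_⟩
      · intro y hy
        rcases List.mem_cons.1 hy with rfl | hy'
        · exact hdb_ca
        · exact hdbB2 y hy'
      · rw [List.pairwise_cons]
        exact ⟨hcaB2, hs2⟩
    · intro x hx y hy
      have h1 := hB1lt x hx
      rcases List.mem_cons.1 hy with rfl | hy'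
      · exact h1
      · rcases List.mem_cons.1 hy' with rfl | hy''
        · exact lt_trans h1 hdb_ca
        · exact lt_trans h1 (hdbB2 y hy'')
  -- membership
  have hmemT : ∀ x, x ∈ T ↔ x ∈ crossingTimes (c + e) (d + f) := by
    intro x
    constructor
    · intro hx
      rw [hTdef] at hx
      rw [mem_crossingTimes]
      rcases List.mem_append.1 hx with hx1 | hx2
      · rcases hB1mem x hx1 with ⟨k, h1, h2, rfl⟩ | ⟨i, h1, h2, rfl⟩
        · exact Or.inl ⟨k, h1, by omega, rfl⟩
        · exact Or.inr ⟨i, h1, by omega, rfl⟩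
      · rcases List.mem_cons.1 hx2 with rfl | hx3
        · exact Or.inr ⟨d, hd, by omega, rfl⟩
        · rcases List.mem_cons.1 hx3 with rfl | hx4
          · exact Or.inl ⟨c, hc, by omega, rfl⟩
          · rcases hB2mem x hx4 with ⟨k, h1, h2, rfl⟩ | ⟨i, h1, h2, rfl⟩
            · exact Or.inl ⟨k + c, by omega, by omega, rfl⟩
            · exact Or.inr ⟨i + d, by omega, by omega, rfl⟩
    · intro hx
      rw [hTdef]
      rcases mem_crossingTimes.1 hx with ⟨k, h1, h2, rfl⟩ | ⟨i, h1, h2, rfl⟩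
      · rcases lt_trichotomy k c with hkc | rfl | hkc
        · refine List.mem_append.2 (Or.inl ?_)
          refine List.mem_map.2 ⟨(k : ℚ) / c, ?_, phiL_vert k (by omega)⟩
          rw [hL1def, Finset.mem_sort, mem_crossingTimes]
          exact Or.inl ⟨k, h1, by omega, rfl⟩
        · exact List.mem_append.2 (Or.inr (by simp))
        · refine List.mem_append.2 (Or.inr (List.mem_cons.2 (Or.inr
            (List.mem_cons.2 (Or.inr ?_)))))
          refine List.mem_map.2 ⟨((k - c : ℕ) : ℚ) / e, ?_, ?_⟩
          · rw [hL2def, Finset.mem_sort, mem_crossingTimes]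
            exact Or.inl ⟨k - c, by omega, by omega, rfl⟩
          · rw [hφ₂, phiR_vert (k - c) (by omega)]
            congr 2
            omega
      · rcases lt_trichotomy i d with hid | rfl | hid
        · refine List.mem_append.2 (Or.inl ?_)
          refine List.mem_map.2 ⟨(i : ℚ) / d, ?_, phiL_horiz hcd h1 (by omega)⟩
          rw [hL1def, Finset.mem_sort, mem_crossingTimes]
          exact Or.inr ⟨i, h1, by omega, rfl⟩
        · exact List.mem_append.2 (Or.inr (by simp))
        · refine List.mem_append.2 (Or.inr (List.mem_cons.2 (Or.inr
            (List.mem_cons.2 (Or.inr ?_)))))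
          refine List.mem_map.2 ⟨((i - d : ℕ) : ℚ) / f, ?_, ?_⟩
          · rw [hL2def, Finset.mem_sort, mem_crossingTimes]
            exact Or.inr ⟨i - d, by omega, by omega, rfl⟩
          · rw [hφ₂, phiR_horiz hef (by omega) (by omega)]
            congr 2
            omega
  have hsort : (crossingTimes (c + e) (d + f)).sort (· ≤ ·) = T :=
    sort_eq_of hsT hmemT
  -- now compute the word
  rw [tumbleWord, hsort, hTdef]
  rw [List.map_append, List.append_assoc]
  congr 1
  · -- first block
    rw [hB1def, List.map_map]
    have h0 : tumbleWord c d = L1.map fun t =>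
        if (t * (c : ℚ)).den = 1 then Letter.r else Letter.u := rfl
    rw [h0]
    refine List.map_congr_left ?_
    intro t ht
    rcases hL1 t ht with ⟨k, h1, h2, h3, h4⟩ | ⟨i, h1, h2, h3, h4⟩
    · have e1 : ((t * (c : ℚ)).den = 1) := by
        rw [h3]
        exact vert_den (by omega)
      have e2 : ((φ₁ t * ((c + e : ℕ) : ℚ)).den = 1) := by
        rw [h4]
        exact vert_den (by omega)
      simp only [Function.comp_apply, e1, e2, if_pos, if_true]
    · have e1 : ¬((t * (c : ℚ)).den = 1) := by
        rw [h3]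
        exact horiz_den hcd h1 h2
      have e2 : ¬((φ₁ t * ((c + e : ℕ) : ℚ)).den = 1) := by
        rw [h4]
        exact horiz_den hab h1 (by omega)
      simp only [Function.comp_apply, e1, e2, if_neg, if_false]
  · -- middle and second block
    rw [List.map_cons, List.map_cons]
    have em : ¬((((d : ℚ) / ((d + f : ℕ) : ℚ)) * ((c + e : ℕ) : ℚ)).den = 1) :=
      horiz_den hab hd (by omega)
    have er : ((((c : ℚ) / ((c + e : ℕ) : ℚ)) * ((c + e : ℕ) : ℚ)).den = 1) :=
      vert_den (by omega)
    rw [if_neg em, if_pos er]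
    show Letter.u :: Letter.r :: _ = Letter.u :: Letter.r :: tumbleWord e f
    congr 1
    congr 1
    -- second block
    rw [hB2def, List.map_map]
    have h0 : tumbleWord e f = L2.map fun t =>
        if (t * (e : ℚ)).den = 1 then Letter.r else Letter.u := rfl
    rw [h0]
    refine List.map_congr_left ?_
    intro t ht
    rcases hL2 t ht with ⟨k, h1, h2, h3, h4⟩ | ⟨i, h1, h2, h3, h4⟩
    · have e1 : ((t * (e : ℚ)).den = 1) := by
        rw [h3]
        exact vert_den (by omega)
      have e2 : ((φ₂ t * ((c + e : ℕ) : ℚ)).den = 1) := by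
        rw [h4]
        exact vert_den (by omega)
      simp only [Function.comp_apply, e1, e2, if_pos, if_true]
    · have e1 : ¬((t * (e : ℚ)).den = 1) := by
        rw [h3]
        exact horiz_den hef h1 h2
      have e2 : ¬((φ₂ t * ((c + e : ℕ) : ℚ)).den = 1) := by
        rw [h4]
        exact horiz_den hab (by omega) (by omega)
      simp only [Function.comp_apply, e1, e2, if_neg, if_false]

end MainSplice

section Invariant

lemma orient_ur : orient [Letter.u, Letter.r] = ρ * υ := by
  simp [orient, toPerm]

lemma sigmaPt_10 : sigmaPt (1, 0) = υ⁻¹ := by simp [sigmaPt]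

lemma sigmaPt_01 : sigmaPt (0, 1) = ρ⁻¹ := by simp [sigmaPt]

lemma sigma_splice {c d e f : ℕ} (hdet : c * f = d * e + 1) :
    Sig (c + e, d + f) = Sig (e, f) * Sig (c, d) := by
  have hc : c ≠ 0 := by
    rintro rfl
    rw [zero_mul] at hdet
    exact absurd hdet.symm (Nat.succ_ne_zero _)
  have hf : f ≠ 0 := by
    rintro rfl
    rw [mul_zero] at hdet
    exact absurd hdet.symm (Nat.succ_ne_zero _)
  rcases Nat.eq_zero_or_pos d with rfl | hd
  · -- d = 0 : c = f = 1
    rw [zero_mul, zero_add] at hdet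
    obtain ⟨rfl, rfl⟩ : c = 1 ∧ f = 1 :=
      ⟨Nat.dvd_one.mp ⟨f, hdet.symm⟩,
        Nat.dvd_one.mp ⟨c, by rw [mul_comm] at hdet; exact hdet.symm⟩⟩
    rcases Nat.eq_zero_or_pos e with rfl | he
    · rw [Sig_01, Sig_10]
      show Sig (1, 1) = υ * ρ
      rw [Sig, sigmaPt_a1 le_rfl]
      simp
    · rw [Sig_10]
      obtain ⟨e', rfl⟩ : ∃ e', e = e' + 1 := ⟨e - 1, by omega⟩
      show Sig (1 + (e' + 1), 1) = Sig (e' + 1, 1) * ρ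
      rw [Sig, Sig, sigmaPt_a1 (by omega), sigmaPt_a1 (by omega)]
      rw [show 1 + (e' + 1) - 1 = e' + 1 from by omega, Nat.add_sub_cancel, pow_succ]
      group
  · rcases Nat.eq_zero_or_pos e with rfl | he
    · -- e = 0 : c = f = 1
      rw [mul_zero, zero_add] at hdet
      obtain ⟨rfl, rfl⟩ : c = 1 ∧ f = 1 :=
        ⟨Nat.dvd_one.mp ⟨f, hdet.symm⟩,
          Nat.dvd_one.mp ⟨c, by rw [mul_comm] at hdet; exact hdet.symm⟩⟩
      rw [Sig_01]
      show Sig (1, d + 1) = υ * Sig (1, d)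
      rw [Sig, Sig, sigmaPt_1b (by omega), sigmaPt_1b hd]
      obtain ⟨d', rfl⟩ : ∃ d', d = d' + 1 := ⟨d - 1, by omega⟩
      rw [Nat.add_sub_cancel, Nat.add_sub_cancel, pow_succ']
      group
    · -- main case
      have hc' : 1 ≤ c := by omega
      have hf' : 1 ≤ f := by omega
      have hsp := tumble_splice hd he hdet
      have h1 : sigmaPt (c + e, d + f) = orient (tumbleWord (c + e) (d + f)) := by
        rw [sigmaPt, if_neg (by simp [Prod.ext_iff]; omega),
          if_neg (by simp [Prod.ext_iff]; omega)]
      have h2 : sigmaPt (c, d) = orient (tumbleWord c d) := by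
        rw [sigmaPt, if_neg (by simp [Prod.ext_iff]; omega),
          if_neg (by simp [Prod.ext_iff]; omega)]
      have h3 : sigmaPt (e, f) = orient (tumbleWord e f) := by
        rw [sigmaPt, if_neg (by simp [Prod.ext_iff]; omega),
          if_neg (by simp [Prod.ext_iff]; omega)]
      rw [Sig, Sig, Sig, h1, h2, h3, hsp, orient_append, orient_append, orient_ur]
      group

/-- The invariant carried by each Stern–Brocot triple `(g, g⁺, g⁻)`:
`g = g⁺ + g⁻`, the determinant of the parents is `1`, `Sig` is multiplicative over
the parents, and the commutator identity. -/
def SBInv (t : (ℕ × ℕ) × (ℕ × ℕ) × (ℕ × ℕ)) : Prop :=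
  t.1 = t.2.1 + t.2.2 ∧
    t.2.2.1 * t.2.1.2 = t.2.2.2 * t.2.1.1 + 1 ∧
    Sig t.1 = Sig t.2.1 * Sig t.2.2 ∧
    (Sig t.2.2)⁻¹ * Sig t.2.1 * Sig t.2.2 * (Sig t.2.1)⁻¹ = ρ⁻¹ * υ * ρ * υ⁻¹

lemma inv_root : SBInv ((1, 1), (0, 1), (1, 0)) := by
  unfold SBInv
  refine ⟨rfl, rfl, ?_, ?_⟩
  · exact sigma_splice (c := 1) (d := 0) (e := 0) (f := 1) rfl
  · rw [Sig_01, Sig_10]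

lemma inv_step {t : (ℕ × ℕ) × (ℕ × ℕ) × (ℕ × ℕ)} (h : SBInv t) (ε : Bool) :
    SBInv (sbStep t ε) := by
  obtain ⟨⟨g1, g2⟩, ⟨p1, p2⟩, ⟨m1, m2⟩⟩ := t
  obtain ⟨h1, h2, h3, h4⟩ := h
  simp only [Prod.mk_add_mk, Prod.mk.injEq] at h1 h2 h3 h4
  obtain ⟨e1, e2⟩ := h1
  subst e1
  subst e2
  have hdetf : m1 * (p2 + m2) = m2 * (p1 + m1) + 1 := by nlinarith [h2]
  have hdett : (p1 + m1) * p2 = (p2 + m2) * p1 + 1 := by nlinarith [h2]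
  cases ε
  · -- false : (g + gm, g, gm)
    unfold SBInv
    refine ⟨rfl, hdetf, ?_, ?_⟩
    · show Sig ((p1 + m1, p2 + m2) + (m1, m2)) =
        Sig (p1 + m1, p2 + m2) * Sig (m1, m2)
      have hh := sigma_splice (c := m1) (d := m2) (e := p1 + m1) (f := p2 + m2) hdetf
      rw [Prod.mk_add_mk]
      rw [show m1 + (p1 + m1) = p1 + m1 + m1 from by omega,
        show m2 + (p2 + m2) = p2 + m2 + m2 from by omega] at hh
      exact hh
    · show (Sig (m1, m2))⁻¹ * Sig (p1 + m1, p2 + m2) * Sig (m1, m2) *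
        (Sig (p1 + m1, p2 + m2))⁻¹ = ρ⁻¹ * υ * ρ * υ⁻¹
      rw [h3, ← h4]
      group
  · -- true : (g + gp, gp, g)
    unfold SBInv
    refine ⟨?_, hdett, ?_, ?_⟩
    · show ((p1 + m1, p2 + m2) + (p1, p2) : ℕ × ℕ) =
        (p1, p2) + (p1 + m1, p2 + m2)
      rw [Prod.mk_add_mk, Prod.mk_add_mk]
      simp [Nat.add_comm]
    · show Sig ((p1 + m1, p2 + m2) + (p1, p2)) =
        Sig (p1, p2) * Sig (p1 + m1, p2 + m2)
      exact sigma_splice (c := p1 + m1) (d := p2 + m2) (e := p1) (f := p2) hdett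
    · show (Sig (p1 + m1, p2 + m2))⁻¹ * Sig (p1, p2) * Sig (p1 + m1, p2 + m2) *
        (Sig (p1, p2))⁻¹ = ρ⁻¹ * υ * ρ * υ⁻¹
      rw [h3, ← h4]
      group

lemma inv_sb (w : List Bool) : SBInv (sb w) := by
  have main : ∀ (l : List Bool) (t : (ℕ × ℕ) × (ℕ × ℕ) × (ℕ × ℕ)),
      SBInv t → SBInv (l.foldl sbStep t) := by
    intro l
    induction l with
    | nil => exact fun t h => h
    | cons x xs ih => exact fun t h => ih _ (inv_step h x)
  exact main w _ inv_root

lemma sb_append_one (w : List Bool) (ε : Bool) :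
    sb (w ++ [ε]) = sbStep (sb w) ε := by
  rw [sb, List.foldl_append]
  rfl

lemma sb_append_two (w : List Bool) (ε ε' : Bool) :
    sb (w ++ [ε, ε']) = sbStep (sbStep (sb w) ε) ε' := by
  rw [sb, List.foldl_append]
  rfl

lemma σnode_eq (w : List Bool) : σnode w = υ⁻¹ * Sig (sb w).1 * ρ⁻¹ := by
  rw [σnode, Sig]
  group

end Invariant

section Final

lemma SBInv.p1 {x y z : ℕ × ℕ} (h : SBInv (x, y, z)) : Sig x = Sig y * Sig z :=
  h.2.2.1

lemma SBInv.p2 {x y z : ℕ × ℕ} (h : SBInv (x, y, z)) :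
    (Sig z)⁻¹ * Sig y * Sig z * (Sig y)⁻¹ = ρ⁻¹ * υ * ρ * υ⁻¹ :=
  h.2.2.2

lemma four_claims (w : List Bool) :
    (σnode (w ++ [true, true]) =
        σnode (w ++ [true]) * (σnode w)⁻¹ * σnode (w ++ [true]) ∧
      σnode (w ++ [true, false]) = σnode w * υ * ρ * σnode (w ++ [true])) ∧
    (σnode (w ++ [false, false]) =
        σnode (w ++ [false]) * (σnode w)⁻¹ * σnode (w ++ [false]) ∧
      σnode (w ++ [false, true]) = σnode w * ρ * υ * σnode (w ++ [false])) := by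
  rcases hsb : sb w with ⟨g, gp, gm⟩
  have hW : SBInv (g, gp, gm) := hsb ▸ inv_sb w
  have ht : sb (w ++ [true]) = (g + gp, gp, g) := by rw [sb_append_one, hsb]; rfl
  have htt : sb (w ++ [true, true]) = (g + gp + gp, gp, g + gp) := by
    rw [sb_append_two, hsb]; rfl
  have htf : sb (w ++ [true, false]) = (g + gp + g, g + gp, g) := by
    rw [sb_append_two, hsb]; rfl
  have hf : sb (w ++ [false]) = (g + gm, g, gm) := by rw [sb_append_one, hsb]; rfl
  have hff : sb (w ++ [false, false]) = (g + gm + gm, g + gm, gm) := by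
    rw [sb_append_two, hsb]; rfl
  have hft : sb (w ++ [false, true]) = (g + gm + g, g, g + gm) := by
    rw [sb_append_two, hsb]; rfl
  have P1w : Sig g = Sig gp * Sig gm := hW.p1
  have P2w : (Sig gm)⁻¹ * Sig gp * Sig gm * (Sig gp)⁻¹ = ρ⁻¹ * υ * ρ * υ⁻¹ := hW.p2
  have P1t : Sig (g + gp) = Sig gp * Sig g := (ht ▸ inv_sb (w ++ [true])).p1
  have P1tt : Sig (g + gp + gp) = Sig gp * Sig (g + gp) :=
    (htt ▸ inv_sb (w ++ [true, true])).p1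
  have P1tf : Sig (g + gp + g) = Sig (g + gp) * Sig g :=
    (htf ▸ inv_sb (w ++ [true, false])).p1
  have P1f : Sig (g + gm) = Sig g * Sig gm := (hf ▸ inv_sb (w ++ [false])).p1
  have P1ff : Sig (g + gm + gm) = Sig (g + gm) * Sig gm :=
    (hff ▸ inv_sb (w ++ [false, false])).p1
  have P1ft : Sig (g + gm + g) = Sig g * Sig (g + gm) :=
    (hft ▸ inv_sb (w ++ [false, true])).p1
  have s0 : σnode w = υ⁻¹ * Sig g * ρ⁻¹ := by rw [σnode_eq, hsb]
  have st : σnode (w ++ [true]) = υ⁻¹ * Sig (g + gp) * ρ⁻¹ := by rw [σnode_eq, ht]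
  have stt : σnode (w ++ [true, true]) = υ⁻¹ * Sig (g + gp + gp) * ρ⁻¹ := by
    rw [σnode_eq, htt]
  have stf : σnode (w ++ [true, false]) = υ⁻¹ * Sig (g + gp + g) * ρ⁻¹ := by
    rw [σnode_eq, htf]
  have sf : σnode (w ++ [false]) = υ⁻¹ * Sig (g + gm) * ρ⁻¹ := by rw [σnode_eq, hf]
  have sff : σnode (w ++ [false, false]) = υ⁻¹ * Sig (g + gm + gm) * ρ⁻¹ := by
    rw [σnode_eq, hff]
  have sft : σnode (w ++ [false, true]) = υ⁻¹ * Sig (g + gm + g) * ρ⁻¹ := by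
    rw [σnode_eq, hft]
  refine ⟨⟨?_, ?_⟩, ?_, ?_⟩
  · rw [stt, st, s0, P1tt, P1t]
    group
  · rw [stf, st, s0, P1tf, P1t, P1w]
    trans (υ⁻¹ * (Sig gp * Sig gm) * ρ⁻¹ *
      (ρ * ((Sig gm)⁻¹ * Sig gp * Sig gm * (Sig gp)⁻¹)) *
      (Sig gp * (Sig gp * Sig gm)) * ρ⁻¹)
    · group
    · rw [P2w]
      group
  · rw [sff, sf, s0, P1ff, P1f]
    group
  · rw [sft, sf, s0, P1ft, P1f]
    group

end Final

/-- Let `s` be the node indexed by `w` and let `t` be a child of `s`, with `t₊, t₋`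
the positive and negative children of `t`.  If `t` is the positive child of `s`, then
`σ(t₊) = σ(t)·σ(s)⁻¹·σ(t)` and `σ(t₋) = σ(t)·ρ·υ·σ(s)`; if `t` is the negative child
of `s`, then `σ(t₋) = σ(t)·σ(s)⁻¹·σ(t)` and `σ(t₊) = σ(t)·υ·ρ·σ(s)`.  (Products are
composed left-to-right, the leftmost factor acting first; in Mathlib's convention
`(f * g) x = f (g x)`, the left-to-right product `σ(t)·ρ·υ·σ(s)` is written
`σ(s) * υ * ρ * σ(t)`, etc.)  In particular, the label `(σ(s), σ(t), ε)` of a tree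
edge uniquely determines the labels of the two edges leaving `t`. -/
theorem child_edge_labels (w : List Bool) :
    ((σnode (w ++ [true, true]) =
          σnode (w ++ [true]) * (σnode w)⁻¹ * σnode (w ++ [true]) ∧
        σnode (w ++ [true, false]) = σnode w * υ * ρ * σnode (w ++ [true])) ∧
      (σnode (w ++ [false, false]) =
          σnode (w ++ [false]) * (σnode w)⁻¹ * σnode (w ++ [false]) ∧
        σnode (w ++ [false, true]) = σnode w * ρ * υ * σnode (w ++ [false]))) ∧
      (∀ w' : List Bool, ∀ ε : Bool, σnode w = σnode w' →
        σnode (w ++ [ε]) = σnode (w' ++ [ε]) →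
        ∀ ε' : Bool, σnode (w ++ [ε, ε']) = σnode (w' ++ [ε, ε'])) := by
  refine ⟨four_claims w, ?_⟩
  intro w' ε h1 h2 ε'
  cases ε <;> cases ε'
  · rw [((four_claims w).2).1, ((four_claims w').2).1, h1, h2]
  · rw [((four_claims w).2).2, ((four_claims w').2).2, h1, h2]
  · rw [((four_claims w).1).2, ((four_claims w').1).2, h1, h2]
  · rw [((four_claims w).1).1, ((four_claims w').1).1, h1, h2]
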